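/- Let r ≥ 2 and n ≥ 1 be integers, let l be an integer with 0 ≤ l ≤ n, and let ε ∈ {0,1,…,r−1}^n be given by ε_i = 1 for 1 ≤ i ≤ l and ε_i = 0 for l < i ≤ n. Let ρ be the permutation of {1,…,n} with ρ(i) = l+1−i for 1 ≤ i ≤ l and ρ(i) = i for l < i ≤ n. Then for every permutation π of {1,…,n}, setting γ = (ε_{π(1)},…,ε_{π(n)}), one has Des(γ,π) ∖ {0} = Des(ρ∘π), where Des(ρ∘π) = {i ∈ {1,…,n−1} : (ρ∘π)(i) > (ρ∘π)(i+1)} is the ordinary descent set; moreover 0 ∈ Des(γ,π) if and only if π(1) ≤ l. -/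
import Mathlib


open Finset

/-- 1-based value of `π` at position `i ∈ {1,…,n}`, with the convention `π(0) = 0`. -/
def wval {n : ℕ} (π : Equiv.Perm (Fin n)) (i : ℕ) : ℕ :=
  if h : 1 ≤ i ∧ i ≤ n then (π ⟨i - 1, by omega⟩ : ℕ) + 1 else 0

/-- Color at position `i` (1-based), with the convention `ε_0 = 0`. -/
def wcolor {n : ℕ} (ε : Fin n → ℕ) (i : ℕ) : ℕ :=
  if h : 1 ≤ i ∧ i ≤ n then ε ⟨i - 1, by omega⟩ else 0

/-- The Biagioli–Zeng order on colored letters: `(j,c) > (k,d)`. -/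
def bzGT (a b : ℕ × ℕ) : Prop :=
  (a.2 = 0 ∧ b.2 = 0 ∧ b.1 < a.1) ∨ (0 < a.2 ∧ 0 < b.2 ∧ a.1 < b.1) ∨ (a.2 = 0 ∧ 0 < b.2)

instance (a b : ℕ × ℕ) : Decidable (bzGT a b) := by unfold bzGT; exact inferInstance

/-- The descent set `Des(ε,π) ⊆ {0,…,n-1}` of a colored permutation. -/
def DesBZ {n : ℕ} (ε : Fin n → ℕ) (π : Equiv.Perm (Fin n)) : Finset ℕ :=
  (Finset.range n).filter fun i =>
    bzGT (wval π i, wcolor ε i) (wval π (i + 1), wcolor ε (i + 1))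

def desBZ {n : ℕ} (ε : Fin n → ℕ) (π : Equiv.Perm (Fin n)) : ℕ := (DesBZ ε π).card

def majBZ {n : ℕ} (ε : Fin n → ℕ) (π : Equiv.Perm (Fin n)) : ℕ := ∑ i ∈ DesBZ ε π, i

/-- The color weight `col(ε)`. -/
def colwt {n : ℕ} (ε : Fin n → ℕ) : ℕ := ∑ i, ε i

/-- Ordinary descent set `{i ∈ {1,…,n-1} : σ(i) > σ(i+1)}` (1-based). -/
def ordDes {n : ℕ} (σ : Equiv.Perm (Fin n)) : Finset ℕ :=
  (Finset.range n).filter fun i => 1 ≤ i ∧ wval σ (i + 1) < wval σ i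

noncomputable def qP : MvPolynomial (Fin 2) ℤ := MvPolynomial.X 0
noncomputable def uP : MvPolynomial (Fin 2) ℤ := MvPolynomial.X 1
noncomputable def qNat (m : ℕ) : MvPolynomial (Fin 2) ℤ := ∑ i ∈ Finset.range m, qP ^ i
noncomputable def uNat (m : ℕ) : MvPolynomial (Fin 2) ℤ := ∑ i ∈ Finset.range m, uP ^ i

/-- The monomial `m'(j,k)`. -/
noncomputable def mPrime (j k : ℕ) : MvPolynomial (Fin 2) ℤ :=
  if j ≤ k then qP ^ j else qP ^ ((j - 1) % k) * uP ^ ((j - 1) / k)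

/-- Lattice points of `cone(F_ε)` at height `k`. -/
def Lset {n : ℕ} (ε : Fin n → ℕ) (k : ℕ) : Finset (Fin n → ℕ) :=
  Fintype.piFinset fun i =>
    if 0 < ε i then Finset.Ioc (k * ε i) (k * (ε i + 1)) else Finset.Icc 0 k

theorem descents_via_rho (r n : ℕ) (hr : 2 ≤ r) (hn : 1 ≤ n)
    (l : ℕ) (hl : l ≤ n) (ε : Fin n → ℕ)
    (hε : ∀ i : Fin n, ε i = if (i : ℕ) < l then 1 else 0)
    (ρ : Equiv.Perm (Fin n))
    (hρ : ∀ i : Fin n, (ρ i : ℕ) = if (i : ℕ) < l then l - 1 - (i : ℕ) else (i : ℕ))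
    (π : Equiv.Perm (Fin n)) :
    DesBZ (fun i => ε (π i)) π \ {0} = ordDes (ρ * π) ∧
      (0 ∈ DesBZ (fun i => ε (π i)) π ↔ (π ⟨0, by omega⟩ : ℕ) < l) := by

  have hρπ : ∀ x : Fin n, ((ρ * π) x : ℕ) =
      if (π x : ℕ) < l then l - 1 - (π x : ℕ) else (π x : ℕ) := by
    intro x
    simpa using hρ (π x)
  have key : ∀ i, 1 ≤ i → i < n →
      (bzGT (wval π i, wcolor (fun j => ε (π j)) i)
        (wval π (i+1), wcolor (fun j => ε (π j)) (i+1))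
      ↔ wval (ρ * π) (i + 1) < wval (ρ * π) i) := by
    intro i h1 h2
    have hi1 : i - 1 < n := by omega
    have e1 : wval π i = (π ⟨i - 1, hi1⟩ : ℕ) + 1 := by
      unfold wval; rw [dif_pos ⟨h1, by omega⟩]
    have efin : (⟨i + 1 - 1, by omega⟩ : Fin n) = ⟨i, h2⟩ := by ext; simp
    have e2 : wval π (i+1) = (π ⟨i, h2⟩ : ℕ) + 1 := by
      unfold wval; rw [dif_pos ⟨by omega, by omega⟩, efin]
    have c1 : wcolor (fun j => ε (π j)) i = if (π ⟨i - 1, hi1⟩ : ℕ) < l then 1 else 0 := by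
      unfold wcolor; rw [dif_pos ⟨h1, by omega⟩]; exact hε _
    have c2 : wcolor (fun j => ε (π j)) (i+1) = if (π ⟨i, h2⟩ : ℕ) < l then 1 else 0 := by
      unfold wcolor; rw [dif_pos ⟨by omega, by omega⟩, efin]; exact hε _
    have f1 : wval (ρ * π) i = ((ρ * π) ⟨i - 1, hi1⟩ : ℕ) + 1 := by
      unfold wval; rw [dif_pos ⟨h1, by omega⟩]
    have f2 : wval (ρ * π) (i+1) = ((ρ * π) ⟨i, h2⟩ : ℕ) + 1 := by
      unfold wval; rw [dif_pos ⟨by omega, by omega⟩, efin]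
    rw [e1, e2, c1, c2, f1, f2, hρπ, hρπ]
    clear e1 e2 c1 c2 f1 f2
    generalize (π ⟨i - 1, hi1⟩ : ℕ) = p
    generalize (π ⟨i, h2⟩ : ℕ) = q
    unfold bzGT
    dsimp only
    split_ifs <;> simp <;> omega
  constructor
  · ext i
    simp only [Finset.mem_sdiff, Finset.mem_singleton, DesBZ, ordDes, Finset.mem_filter,
      Finset.mem_range]
    constructor
    · rintro ⟨⟨hi, hd⟩, h0⟩
      have h1 : 1 ≤ i := Nat.one_le_iff_ne_zero.mpr h0
      exact ⟨hi, h1, (key i h1 hi).mp hd⟩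
    · rintro ⟨hi, h1, hd⟩
      exact ⟨⟨hi, (key i h1 hi).mpr hd⟩, by omega⟩
  · simp only [DesBZ, Finset.mem_filter, Finset.mem_range]
    have e0 : wval π 0 = 0 := by unfold wval; rw [dif_neg (by omega)]
    have c0 : wcolor (fun j => ε (π j)) 0 = 0 := by unfold wcolor; rw [dif_neg (by omega)]
    have e1 : wval π 1 = (π ⟨0, by omega⟩ : ℕ) + 1 := by
      unfold wval; rw [dif_pos ⟨le_refl 1, hn⟩]
    have c1 : wcolor (fun j => ε (π j)) 1 = if (π ⟨0, by omega⟩ : ℕ) < l then 1 else 0 := by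
      unfold wcolor; rw [dif_pos ⟨le_refl 1, hn⟩]; exact hε _
    rw [e0, c0, e1, c1]
    unfold bzGT
    dsimp only
    constructor
    · rintro ⟨-, h⟩
      split_ifs at h <;> omega
    · intro h
      refine ⟨by omega, ?_⟩
      rw [if_pos h]
      omega
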